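/- Let Φ be a real n×m matrix whose columns all have unit Euclidean norm, let 1 ≤ k < m, and suppose the Babel function satisfies μ₁(k) < 1/2. Then for every index set A ⊆ {1,…,m} with |A| = k and every vector v ∈ ℝ^k, ‖Φ_A v‖₂² > (1/2)‖v‖₂²; in particular Φ_A has full column rank and its smallest singular value exceeds 1/√2. -/

import Mathlib

open Matrix

/-- The Euclidean (ℓ₂) norm of a finitely indexed real vector. -/
noncomputable def enorm' {ι : Type*} [Fintype ι] (v : ι → ℝ) : ℝ :=
  ‖(WithLp.equiv 2 (ι → ℝ)).symm v‖

/-- The Babel function `μ₁(k)`: the maximum, over index sets `Λ` of cardinality `k`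
and indices `i ∉ Λ`, of `∑_{j∈Λ} |⟨φ_i, φ_j⟩|`, where `⟨φ_i, φ_j⟩ = (ΦᵀΦ) i j`. -/
noncomputable def babel {n m : ℕ} (Φ : Matrix (Fin n) (Fin m) ℝ) (k : ℕ) : ℝ :=
  sSup {c : ℝ | ∃ Λ : Finset (Fin m), Λ.card = k ∧
    ∃ i, i ∉ Λ ∧ c = ∑ j ∈ Λ, |(Φᵀ * Φ) i j|}

/-- The submatrix of `Φ` consisting of the columns indexed by the finite set `A`. -/
def subCols {n m : ℕ} (Φ : Matrix (Fin n) (Fin m) ℝ) (A : Finset (Fin m)) :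
    Matrix (Fin n) ↥A ℝ :=
  Matrix.of fun i (j : ↥A) => Φ i j.1

lemma enorm_sq {ι : Type*} [Fintype ι] (v : ι → ℝ) : enorm' v ^ 2 = ∑ i, v i ^ 2 := by
  rw [enorm', EuclideanSpace.norm_eq, Real.sq_sqrt (by positivity)]
  simp [Real.norm_eq_abs, sq_abs]

lemma babel_row_bound {n m : ℕ} (Φ : Matrix (Fin n) (Fin m) ℝ) (k : ℕ)
    (A : Finset (Fin m)) (hA : A.card = k) (hkm : k < m) {i : Fin m} (hi : i ∈ A) :
    ∑ j ∈ A.erase i, |(Φᵀ * Φ) i j| ≤ babel Φ k := by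
  obtain ⟨l, hl⟩ : ∃ l, l ∉ A := by
    by_contra h
    push_neg at h
    have hu : A = Finset.univ := Finset.eq_univ_iff_forall.mpr h
    rw [hu, Finset.card_univ, Fintype.card_fin] at hA
    omega
  have hk1 : 1 ≤ k := hA ▸ Finset.card_pos.mpr ⟨i, hi⟩
  have hlni : l ∉ A.erase i := fun h => hl (Finset.mem_of_mem_erase h)
  have hcard : (insert l (A.erase i)).card = k := by
    rw [Finset.card_insert_of_notMem hlni, Finset.card_erase_of_mem hi, hA]
    omega
  have hini : i ∉ insert l (A.erase i) := by
    intro h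
    rcases Finset.mem_insert.mp h with h | h
    · exact hl (h ▸ hi)
    · exact (Finset.mem_erase.mp h).1 rfl
  have hfin : {c : ℝ | ∃ Λ : Finset (Fin m), Λ.card = k ∧
      ∃ i, i ∉ Λ ∧ c = ∑ j ∈ Λ, |(Φᵀ * Φ) i j|}.Finite := by
    apply Set.Finite.subset (Set.finite_range
      (fun p : Finset (Fin m) × Fin m => ∑ j ∈ p.1, |(Φᵀ * Φ) p.2 j|))
    rintro c ⟨Λ, _, i, _, rfl⟩
    exact ⟨(Λ, i), rfl⟩
  have hmem : (∑ j ∈ insert l (A.erase i), |(Φᵀ * Φ) i j|) ∈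
      {c : ℝ | ∃ Λ : Finset (Fin m), Λ.card = k ∧
        ∃ i, i ∉ Λ ∧ c = ∑ j ∈ Λ, |(Φᵀ * Φ) i j|} := ⟨_, hcard, i, hini, rfl⟩
  calc ∑ j ∈ A.erase i, |(Φᵀ * Φ) i j|
      ≤ ∑ j ∈ insert l (A.erase i), |(Φᵀ * Φ) i j| := by
        rw [Finset.sum_insert hlni]
        exact le_add_of_nonneg_left (abs_nonneg _)
    _ ≤ babel Φ k := le_csSup hfin.bddAbove hmem

/-- for a dictionary `Φ` with unit-norm columns, `1 ≤ k < m`, and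
Babel function `μ₁(k) < 1/2`, every `k`-column submatrix `Φ_A` satisfies
`‖Φ_A v‖₂² > (1/2)‖v‖₂²` for all `v ≠ 0`; in particular `Φ_A` has full column
rank and its smallest singular value exceeds `1/√2`. -/
theorem babel_half_implies_well_conditioned {n m : ℕ}
    (Φ : Matrix (Fin n) (Fin m) ℝ)
    (hunit : ∀ j : Fin m, enorm' (fun i => Φ i j) = 1)
    (k : ℕ) (hk1 : 1 ≤ k) (hkm : k < m)
    (hbabel : babel Φ k < 1 / 2) :
    ∀ A : Finset (Fin m), A.card = k →
      (∀ v : ↥A → ℝ, v ≠ 0 →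
        1 / 2 * (enorm' v) ^ 2 < (enorm' ((subCols Φ A).mulVec v)) ^ 2) ∧
      Function.Injective (subCols Φ A).mulVec := by
  intro A hA
  have hdiag : ∀ j : Fin m, (Φᵀ * Φ) j j = 1 := by
    intro j
    have h2 : enorm' (fun i => Φ i j) ^ 2 = 1 := by rw [hunit j]; norm_num
    rw [enorm_sq] at h2
    simpa [Matrix.mul_apply, Matrix.transpose_apply, sq] using h2
  have hsymm : ∀ a b : Fin m, (Φᵀ * Φ) a b = (Φᵀ * Φ) b a := by
    intro a b
    simp [Matrix.mul_apply, Matrix.transpose_apply, mul_comm]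
  have hrow : ∀ j : ↥A, ∑ j' ∈ Finset.univ.erase j, |(Φᵀ * Φ) j.1 j'.1| ≤ babel Φ k := by
    intro j
    have e1 : ∑ j' ∈ Finset.univ.erase j, |(Φᵀ * Φ) j.1 j'.1|
        = ∑ x ∈ A.erase j.1, |(Φᵀ * Φ) j.1 x| := by
      have l1 := Finset.add_sum_erase Finset.univ
        (fun j' : ↥A => |(Φᵀ * Φ) j.1 j'.1|) (Finset.mem_univ j)
      have l2 := Finset.add_sum_erase A (fun x => |(Φᵀ * Φ) j.1 x|) j.2
      have l3 : ∑ j' : ↥A, |(Φᵀ * Φ) j.1 j'.1| = ∑ x ∈ A, |(Φᵀ * Φ) j.1 x| :=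
        Finset.sum_coe_sort A (fun x => |(Φᵀ * Φ) j.1 x|)
      linarith
    rw [e1]
    exact babel_row_bound Φ k A hA hkm j.2
  have hexp : ∀ v : ↥A → ℝ, enorm' ((subCols Φ A).mulVec v) ^ 2
      = ∑ j : ↥A, ∑ j' : ↥A, v j * v j' * (Φᵀ * Φ) j.1 j'.1 := by
    intro v
    rw [enorm_sq]
    simp only [Matrix.mulVec, dotProduct, subCols, Matrix.of_apply]
    calc ∑ i, (∑ j : ↥A, Φ i j.1 * v j) ^ 2
        = ∑ i, ∑ j : ↥A, ∑ j' : ↥A, (Φ i j.1 * v j) * (Φ i j'.1 * v j') := by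
          refine Finset.sum_congr rfl fun i _ => ?_
          rw [sq, Finset.sum_mul_sum]
      _ = ∑ j : ↥A, ∑ j' : ↥A, ∑ i, (Φ i j.1 * v j) * (Φ i j'.1 * v j') := by
          rw [Finset.sum_comm]
          exact Finset.sum_congr rfl fun j _ => Finset.sum_comm
      _ = ∑ j : ↥A, ∑ j' : ↥A, v j * v j' * (Φᵀ * Φ) j.1 j'.1 := by
          refine Finset.sum_congr rfl fun j _ => Finset.sum_congr rfl fun j' _ => ?_
          rw [Matrix.mul_apply]
          simp only [Matrix.transpose_apply]
          rw [Finset.mul_sum]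
          exact Finset.sum_congr rfl fun i _ => by ring
  have key : ∀ v : ↥A → ℝ, v ≠ 0 →
      1 / 2 * (enorm' v) ^ 2 < (enorm' ((subCols Φ A).mulVec v)) ^ 2 := by
    intro v hv
    set T := ∑ j : ↥A, v j ^ 2 with hTdef
    set R := ∑ j : ↥A, ∑ j' ∈ Finset.univ.erase j, v j * v j' * (Φᵀ * Φ) j.1 j'.1 with hRdef
    obtain ⟨j0, hj0⟩ := Function.ne_iff.mp hv
    have hT : 0 < T := by
      have hj0' : v j0 ≠ 0 := by simpa using hj0
      refine Finset.sum_pos' (fun j _ => sq_nonneg _) ⟨j0, Finset.mem_univ _, ?_⟩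
      exact lt_of_le_of_ne (sq_nonneg _) (Ne.symm (pow_ne_zero 2 hj0'))
    have hsplit : (∑ j : ↥A, ∑ j' : ↥A, v j * v j' * (Φᵀ * Φ) j.1 j'.1) = T + R := by
      rw [hTdef, hRdef, ← Finset.sum_add_distrib]
      refine Finset.sum_congr rfl fun j _ => ?_
      rw [← Finset.add_sum_erase Finset.univ
        (fun j' : ↥A => v j * v j' * (Φᵀ * Φ) j.1 j'.1) (Finset.mem_univ j)]
      simp only [hdiag j.1]
      ring
    have hswap : (∑ j : ↥A, ∑ j' ∈ Finset.univ.erase j, v j' ^ 2 / 2 * |(Φᵀ * Φ) j.1 j'.1|)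
        = ∑ j : ↥A, ∑ j' ∈ Finset.univ.erase j, v j ^ 2 / 2 * |(Φᵀ * Φ) j.1 j'.1| := by
      have hc : (∑ x : ↥A, ∑ y ∈ Finset.univ.erase x, v y ^ 2 / 2 * |(Φᵀ * Φ) x.1 y.1|)
          = ∑ y : ↥A, ∑ x ∈ Finset.univ.erase y, v y ^ 2 / 2 * |(Φᵀ * Φ) x.1 y.1| :=
        Finset.sum_comm' (fun x y => by
          simp only [Finset.mem_univ, Finset.mem_erase, true_and, and_true]
          exact ⟨fun h => h.symm, fun h => h.symm⟩)
      rw [hc]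
      refine Finset.sum_congr rfl fun j _ => Finset.sum_congr rfl fun j' _ => ?_
      rw [hsymm j'.1 j.1]
    have hBle : (∑ j : ↥A, ∑ j' ∈ Finset.univ.erase j,
        (v j ^ 2 / 2 + v j' ^ 2 / 2) * |(Φᵀ * Φ) j.1 j'.1|) ≤ babel Φ k * T := by
      have e : (∑ j : ↥A, ∑ j' ∈ Finset.univ.erase j,
          (v j ^ 2 / 2 + v j' ^ 2 / 2) * |(Φᵀ * Φ) j.1 j'.1|)
          = ∑ j : ↥A, v j ^ 2 * ∑ j' ∈ Finset.univ.erase j, |(Φᵀ * Φ) j.1 j'.1| := by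
        simp only [add_mul, Finset.sum_add_distrib]
        rw [hswap, ← Finset.sum_add_distrib]
        refine Finset.sum_congr rfl fun j _ => ?_
        rw [Finset.mul_sum, ← Finset.sum_add_distrib]
        exact Finset.sum_congr rfl fun j' _ => by ring
      rw [e]
      calc (∑ j : ↥A, v j ^ 2 * ∑ j' ∈ Finset.univ.erase j, |(Φᵀ * Φ) j.1 j'.1|)
          ≤ ∑ j : ↥A, v j ^ 2 * babel Φ k :=
            Finset.sum_le_sum fun j _ => mul_le_mul_of_nonneg_left (hrow j) (sq_nonneg _)
        _ = babel Φ k * T := by rw [hTdef, ← Finset.sum_mul]; ring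
    have hRabs : |R| ≤ babel Φ k * T := by
      refine le_trans ?_ hBle
      calc |R| ≤ ∑ j : ↥A, |∑ j' ∈ Finset.univ.erase j, v j * v j' * (Φᵀ * Φ) j.1 j'.1| :=
            Finset.abs_sum_le_sum_abs _ _
        _ ≤ ∑ j : ↥A, ∑ j' ∈ Finset.univ.erase j,
            (v j ^ 2 / 2 + v j' ^ 2 / 2) * |(Φᵀ * Φ) j.1 j'.1| := by
            refine Finset.sum_le_sum fun j _ => ?_
            refine le_trans (Finset.abs_sum_le_sum_abs _ _) (Finset.sum_le_sum fun j' _ => ?_)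
            rw [abs_mul]
            refine mul_le_mul_of_nonneg_right ?_ (abs_nonneg _)
            nlinarith [sq_nonneg (|v j| - |v j'|), sq_abs (v j), sq_abs (v j'),
              abs_mul (v j) (v j'), abs_nonneg (v j * v j')]
    have hR : -(babel Φ k * T) ≤ R := neg_le_of_abs_le hRabs
    rw [hexp v, hsplit, enorm_sq, ← hTdef]
    nlinarith [mul_pos (by linarith : (0:ℝ) < 1/2 - babel Φ k) hT]
  refine ⟨key, ?_⟩
  intro v w h
  by_contra hne
  have hvw : v - w ≠ 0 := sub_ne_zero.mpr hne
  have h0 : (subCols Φ A).mulVec (v - w) = 0 := by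
    rw [Matrix.mulVec_sub, h, sub_self]
  have hk := key (v - w) hvw
  rw [h0] at hk
  have hz : enorm' ((0 : Fin n → ℝ)) ^ 2 = 0 := by
    rw [enorm_sq]; simp
  rw [hz] at hk
  have h1 : 0 < enorm' (v - w) ^ 2 := by
    rw [enorm_sq]
    obtain ⟨j0, hj0⟩ := Function.ne_iff.mp hvw
    have hj0' : (v - w) j0 ≠ 0 := by simpa using hj0
    refine Finset.sum_pos' (fun j _ => sq_nonneg _) ⟨j0, Finset.mem_univ _, ?_⟩
    exact lt_of_le_of_ne (sq_nonneg _) (Ne.symm (pow_ne_zero 2 hj0'))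
  linarith
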